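/- The conjugation action of the alternating group alternatingGroup (Fin 8) on the set of fixed-point-free involutions of Fin 8 (all of which are even permutations, forming a single conjugacy class of the alternating group of size 105) is not primitive: there exists an invariant equivalence relation on this class other than equality and the full relation. -/

import Mathlib

open Equiv Equiv.Perm

private lemma xf_lt : ∀ x v : Fin 8, x.val ^^^ v.val < 8 := by decide
private def xf (v : Fin 8) : Fin 8 → Fin 8 := fun x => ⟨x.val ^^^ v.val, xf_lt x v⟩
private lemma xf_invol (v : Fin 8) : Function.Involutive (xf v) := by
  intro x; simp [xf, _root_.xor_cancel_right]
private def xp (v : Fin 8) : Equiv.Perm (Fin 8) := (xf_invol v).toPerm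

private def e8 : Fin 2 × Fin 4 ≃ Fin 8 where
  toFun p := ⟨p.1.val + 2 * p.2.val, by omega⟩
  invFun x := (⟨x.val % 2, by omega⟩, ⟨x.val / 2, by omega⟩)
  left_inv := by decide
  right_inv := by decide

private def W (π : Equiv.Perm (Fin 4)) (ε : Fin 4 → Bool) : Equiv.Perm (Fin 8) :=
  e8.permCongr
    (Equiv.prodCongrRight (fun _ : Fin 2 => π) *
      Equiv.prodCongrLeft (fun i : Fin 4 => if ε i then Equiv.swap 0 1 else 1))

private lemma two_mul_lt (i : Fin 4) : 2 * i.val < 8 := by have := i.isLt; omega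
private lemma two_mul_succ_lt (i : Fin 4) : 2 * i.val + 1 < 8 := by have := i.isLt; omega

private lemma hxe : ∀ i : Fin 4, 2 * i.val ^^^ 1 = 2 * i.val + 1 := by decide
private lemma Hdiv : ∀ u v : Fin 8, u.val / 2 = v.val / 2 → u = v ∨ u.val = v.val ^^^ 1 := by
  decide
private lemma Hxor1 : ∀ u : Fin 8, u.val ^^^ 1 = 2 * (u.val / 2) + (1 - u.val % 2) := by decide

private lemma claimA (c : Equiv.Perm (Fin 8)) (hc : ∀ x, c (xp 1 x) = xp 1 (c x)) :
    ∃ (π : Equiv.Perm (Fin 4)) (ε : Fin 4 → Bool), c = W π ε := by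
  have key : ∀ x : Fin 8, (xp 1 x).val = x.val ^^^ 1 := fun x => rfl
  have hpair : ∀ i : Fin 4,
      c ⟨2 * i.val + 1, two_mul_succ_lt i⟩ = xp 1 (c ⟨2 * i.val, two_mul_lt i⟩) := by
    intro i
    rw [← hc]
    congr 1
    apply Fin.ext
    rw [key]
    exact (hxe i).symm
  set pfun : Fin 4 → Fin 4 :=
    fun i => ⟨(c ⟨2 * i.val, two_mul_lt i⟩).val / 2, by
      have := (c ⟨2 * i.val, two_mul_lt i⟩).isLt; omega⟩ with hpfun
  have inj : Function.Injective pfun := by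
    intro i j hij
    have hdiv : (c ⟨2 * i.val, two_mul_lt i⟩).val / 2
        = (c ⟨2 * j.val, two_mul_lt j⟩).val / 2 := congrArg Fin.val hij
    rcases Hdiv _ _ hdiv with h | h
    · have := c.injective h
      have := congrArg Fin.val this
      simp only [] at this
      apply Fin.ext; omega
    · have heq : c ⟨2 * i.val, two_mul_lt i⟩ = xp 1 (c ⟨2 * j.val, two_mul_lt j⟩) := by
        apply Fin.ext; rw [key]; exact h
      rw [← hpair j] at heq
      have := congrArg Fin.val (c.injective heq)
      simp only [] at this
      exfalso; omega
  have bij := Finite.injective_iff_bijective.mp inj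
  refine ⟨Equiv.ofBijective pfun bij,
    fun i => decide ((c ⟨2 * i.val, two_mul_lt i⟩).val % 2 = 1), ?_⟩
  apply Equiv.ext
  intro x
  apply Fin.ext
  -- unfold the right-hand side
  have hW : ∀ (π : Equiv.Perm (Fin 4)) (ε : Fin 4 → Bool),
      (W π ε x).val
        = ((if ε ⟨x.val / 2, by omega⟩ then Equiv.swap (0 : Fin 2) 1 else 1)
            ⟨x.val % 2, by omega⟩).val
          + 2 * (π ⟨x.val / 2, by omega⟩).val := by
    intro π ε
    rfl
  rw [hW]
  clear hW
  set i : Fin 4 := ⟨x.val / 2, by omega⟩ with hi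
  have hofb : (Equiv.ofBijective pfun bij) i = pfun i := rfl
  rw [hofb]
  set cv := (c ⟨2 * i.val, two_mul_lt i⟩).val with hcv
  have hpv : (pfun i).val = cv / 2 := rfl
  rw [hpv]
  have hcvlt : cv < 8 := (c _).isLt
  by_cases hb : x.val % 2 = 0
  · -- x = 2*i
    have hx : x = ⟨2 * i.val, two_mul_lt i⟩ := by
      apply Fin.ext; simp only [hi]; omega
    have hcx : (c x).val = cv := by rw [hx]
    rw [hcx]
    by_cases hε : cv % 2 = 1
    · have h0 : (⟨x.val % 2, by omega⟩ : Fin 2) = 0 := by apply Fin.ext; simpa using hb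
      rw [h0]
      simp only [hε, decide_true]
      rw [if_pos trivial, Equiv.swap_apply_left]
      show cv = (1 : Fin 2).val + 2 * (cv / 2)
      simp only [Fin.val_one]
      omega
    · simp only [hε, decide_false]
      rw [if_neg (by simp)]
      show cv = x.val % 2 + 2 * (cv / 2)
      omega
  · -- x = 2*i + 1
    have hb1 : x.val % 2 = 1 := by omega
    have hx : x = ⟨2 * i.val + 1, two_mul_succ_lt i⟩ := by
      apply Fin.ext; simp only [hi]; omega
    have hcx : (c x).val = cv ^^^ 1 := by
      rw [hx, hpair i, key]
    rw [hcx, Hxor1]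
    have hcvd : (c ⟨2 * i.val, two_mul_lt i⟩).val / 2 = cv / 2 := rfl
    by_cases hε : cv % 2 = 1
    · have h1 : (⟨x.val % 2, by omega⟩ : Fin 2) = 1 := by apply Fin.ext; simpa using hb1
      rw [h1]
      simp only [hε, decide_true]
      rw [if_pos trivial, Equiv.swap_apply_right]
      show 2 * (cv / 2) + (1 - cv % 2) = (0 : Fin 2).val + 2 * (cv / 2)
      simp only [Fin.val_zero]
      omega
    · simp only [hε, decide_false]
      rw [if_neg (by simp)]
      show 2 * (cv / 2) + (1 - cv % 2) = x.val % 2 + 2 * (cv / 2)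
      omega

set_option maxHeartbeats 12000000 in
set_option maxRecDepth 100000 in
private lemma claimB : ∀ π : Equiv.Perm (Fin 4), ∀ ε : Fin 4 → Bool,
    (Finset.univ.filter (fun i => ε i)).card % 2 = 0 →
    ∀ u : Fin 8, ∃ w : Fin 8, W π ε * xp u * (W π ε)⁻¹ = xp w := by decide

private lemma sign_W (π : Equiv.Perm (Fin 4)) (ε : Fin 4 → Bool) :
    Equiv.Perm.sign (W π ε) = ∏ i : Fin 4, (if ε i then (-1 : ℤˣ) else 1) := by
  rw [W, sign_permCongr, map_mul, sign_prodCongrRight, sign_prodCongrLeft]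
  have h1 : (∏ _k : Fin 2, Equiv.Perm.sign π) = 1 := by
    rw [Finset.prod_const, Finset.card_univ, Fintype.card_fin]
    exact Int.units_sq _
  rw [h1, one_mul]
  apply Finset.prod_congr rfl
  intro i _
  by_cases h : ε i
  · simp [h, Equiv.Perm.sign_swap (by decide : (0 : Fin 2) ≠ 1)]
  · simp [h]

private lemma bridge : ∀ ε : Fin 4 → Bool,
    (∏ i : Fin 4, (if ε i then (-1 : ℤˣ) else 1)) = 1 →
    (Finset.univ.filter (fun i => ε i)).card % 2 = 0 := by decide

private lemma starStar (c : Equiv.Perm (Fin 8)) (hcomm : c * xp 1 = xp 1 * c)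
    (hs : Equiv.Perm.sign c = 1) : ∀ u, ∃ w, c * xp u * c⁻¹ = xp w := by
  have hpt : ∀ x, c (xp 1 x) = xp 1 (c x) := by
    intro x
    have h := Equiv.ext_iff.mp hcomm x
    simpa [Equiv.Perm.mul_apply] using h
  obtain ⟨π, ε, rfl⟩ := claimA c hpt
  have h1 := sign_W π ε
  rw [hs] at h1
  exact fun u => claimB π ε (bridge ε h1.symm) u

/-- multiplication by a generator of `𝔽₈ˣ`, a linear 7-cycle. -/
private def m : Equiv.Perm (Fin 8) :=
  ⟨![0, 2, 4, 6, 3, 1, 7, 5], ![0, 5, 1, 4, 2, 7, 3, 6], by decide, by decide⟩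

private lemma sign_m : Equiv.Perm.sign m = 1 := by decide
private lemma norm_m : ∀ u, ∃ w, m * xp u * m⁻¹ = xp w := by decide
private lemma norm_minv : ∀ u, ∃ w, m⁻¹ * xp u * m = xp w := by decide

private lemma cpow7aux : ∀ v : Fin 8, v ≠ 0 →
    ∃ k : Fin 7, m ^ (k.val) * xp v * (m ^ (k.val))⁻¹ = xp 1 := by decide

private lemma cpow7 (v : Fin 8) (hv : v ≠ 0) :
    ∃ k : ℕ, m ^ k * xp v * (m ^ k)⁻¹ = xp 1 := by
  obtain ⟨k, hk⟩ := cpow7aux v hv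
  exact ⟨k.val, hk⟩

private lemma npowE : ∀ (k : ℕ) (u : Fin 8), ∃ w, m ^ k * xp u * (m ^ k)⁻¹ = xp w := by
  intro k
  induction k with
  | zero => intro u; exact ⟨u, by simp⟩
  | succ k ih =>
    intro u
    obtain ⟨w, hw⟩ := ih u
    obtain ⟨w', hw'⟩ := norm_m w
    refine ⟨w', ?_⟩
    rw [pow_succ']
    calc (m * m ^ k) * xp u * (m * m ^ k)⁻¹
        = m * (m ^ k * xp u * (m ^ k)⁻¹) * m⁻¹ := by group
      _ = xp w' := by rw [hw]; exact hw'

private lemma npowEinv : ∀ (k : ℕ) (u : Fin 8), ∃ w, (m ^ k)⁻¹ * xp u * m ^ k = xp w := by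
  intro k
  induction k with
  | zero => intro u; exact ⟨u, by simp⟩
  | succ k ih =>
    intro u
    obtain ⟨w, hw⟩ := norm_minv u
    obtain ⟨w', hw'⟩ := ih w
    refine ⟨w', ?_⟩
    rw [pow_succ']
    calc (m * m ^ k)⁻¹ * xp u * (m * m ^ k)
        = (m ^ k)⁻¹ * (m⁻¹ * xp u * m) * m ^ k := by group
      _ = xp w' := by rw [hw]; exact hw'

private lemma hmem : ∀ v : Fin 8, v ≠ 0 →
    (xp v ≠ 1 ∧ (xp v) ^ 2 = 1 ∧ ∀ x : Fin 8, xp v x ≠ x) := by decide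

private lemma xpmul : ∀ v w : Fin 8, xp v * xp w = xp ⟨v.val ^^^ w.val, xf_lt v w⟩ := by decide

private lemma ct_C (σ : Equiv.Perm (Fin 8)) (h1 : σ ≠ 1) (h2 : σ ^ 2 = 1)
    (hf : ∀ x, σ x ≠ x) : σ.cycleType = Multiset.replicate 4 2 := by
  have ho : orderOf σ = 2 := orderOf_eq_prime h2 h1
  have hall : ∀ n ∈ σ.cycleType, n = 2 := by
    intro n hn
    have hd : n ∣ 2 := by
      have h := Multiset.dvd_lcm hn
      rwa [Equiv.Perm.lcm_cycleType, ho] at h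
    have h2le := Equiv.Perm.two_le_of_mem_cycleType hn
    have := Nat.le_of_dvd (by norm_num) hd
    omega
  have hsum : σ.cycleType.sum = 8 := by
    rw [Equiv.Perm.sum_cycleType]
    have hsupp : σ.support = Finset.univ :=
      Finset.eq_univ_iff_forall.mpr (by simpa [Equiv.Perm.mem_support] using hf)
    rw [hsupp]
    simp
  have hrep := Multiset.eq_replicate_of_mem hall
  rw [hrep] at hsum ⊢
  rw [Multiset.sum_replicate, smul_eq_mul] at hsum
  congr 1
  omega

private lemma conj_A8 (x : Equiv.Perm (Fin 8)) (h1 : x ≠ 1) (h2 : x ^ 2 = 1)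
    (hf : ∀ a, x a ≠ a) :
    ∃ g : Equiv.Perm (Fin 8), Equiv.Perm.sign g = 1 ∧ g⁻¹ * x * g = xp 1 := by
  have hx1 := hmem 1 (by decide)
  have hc : IsConj (xp 1) x :=
    Equiv.Perm.isConj_of_cycleType_eq
      (by rw [ct_C _ hx1.1 hx1.2.1 hx1.2.2, ct_C x h1 h2 hf])
  obtain ⟨g, hg⟩ := isConj_iff.mp hc
  have hg' : g⁻¹ * x * g = xp 1 := by rw [← hg]; group
  have hswap' : (Equiv.swap (0 : Fin 8) 1)⁻¹ * xp 1 * Equiv.swap (0 : Fin 8) 1 = xp 1 := by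
    decide
  rcases Int.units_eq_one_or (Equiv.Perm.sign g) with hsg | hsg
  · exact ⟨g, hsg, hg'⟩
  · refine ⟨g * Equiv.swap 0 1, ?_, ?_⟩
    · rw [map_mul, hsg, Equiv.Perm.sign_swap (by decide : (0 : Fin 8) ≠ 1)]
      decide
    · calc (g * Equiv.swap 0 1)⁻¹ * x * (g * Equiv.swap 0 1)
          = (Equiv.swap (0 : Fin 8) 1)⁻¹ * (g⁻¹ * x * g) * Equiv.swap 0 1 := by group
        _ = xp 1 := by rw [hg']; exact hswap'

/-- The conjugation action of the alternating group `A_8` on the set of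
fixed-point-free involutions of `Fin 8` (a single conjugacy class of `A_8`, of size
105) is not primitive: there is an `A_8`-invariant equivalence relation on this
class other than equality and the full relation. -/
theorem imprimitive_fpf_involutions_A8 :
    let C : Set (Equiv.Perm (Fin 8)) :=
      {σ | σ ≠ 1 ∧ σ ^ 2 = 1 ∧ ∀ x : Fin 8, σ x ≠ x}
    ∃ r : Equiv.Perm (Fin 8) → Equiv.Perm (Fin 8) → Prop,
      (∀ x ∈ C, r x x) ∧
      (∀ x ∈ C, ∀ y ∈ C, r x y → r y x) ∧
      (∀ x ∈ C, ∀ y ∈ C, ∀ z ∈ C, r x y → r y z → r x z) ∧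
      (∀ g ∈ alternatingGroup (Fin 8), ∀ x ∈ C, ∀ y ∈ C,
        r x y → r (g * x * g⁻¹) (g * y * g⁻¹)) ∧
      ¬ (∀ x ∈ C, ∀ y ∈ C, (r x y ↔ x = y)) ∧
      ¬ (∀ x ∈ C, ∀ y ∈ C, r x y) := by
  intro C
  refine ⟨fun x y => ∃ g : Equiv.Perm (Fin 8), Equiv.Perm.sign g = 1 ∧
      (∃ v, g⁻¹ * x * g = xp v) ∧ (∃ v, g⁻¹ * y * g = xp v), ?_, ?_, ?_, ?_, ?_, ?_⟩
  · -- reflexivity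
    rintro x ⟨h1, h2, hf⟩
    obtain ⟨g, hsg, hg⟩ := conj_A8 x h1 h2 hf
    exact ⟨g, hsg, ⟨1, hg⟩, ⟨1, hg⟩⟩
  · -- symmetry
    rintro x _ y _ ⟨g, hs, ha, hb⟩
    exact ⟨g, hs, hb, ha⟩
  · -- transitivity
    rintro x hx y hy z hz ⟨g, hsg, hxg, v, hv⟩ ⟨h, hsh, ⟨w, hw⟩, u, hu⟩
    refine ⟨g, hsg, hxg, ?_⟩
    have hv0 : v ≠ 0 := by
      intro h0
      apply hy.1
      rw [h0] at hv
      have hxp0 : xp 0 = 1 := by decide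
      rw [hxp0] at hv
      calc y = g * (g⁻¹ * y * g) * g⁻¹ := by group
        _ = 1 := by rw [hv]; group
    have hw0 : w ≠ 0 := by
      intro h0
      apply hy.1
      rw [h0] at hw
      have hxp0 : xp 0 = 1 := by decide
      rw [hxp0] at hw
      calc y = h * (h⁻¹ * y * h) * h⁻¹ := by group
        _ = 1 := by rw [hw]; group
    obtain ⟨kv, hkv⟩ := cpow7 v hv0
    obtain ⟨kw, hkw⟩ := cpow7 w hw0
    set bv := m ^ kv with hbv
    set bw := m ^ kw with hbw
    set k := bv * g⁻¹ * h * bw⁻¹ with hk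
    have hsk : Equiv.Perm.sign k = 1 := by
      rw [hk, hbv, hbw]
      rw [map_mul, map_mul, map_mul, map_inv, map_inv, map_pow, map_pow, sign_m, hsg, hsh]
      simp
    have e1 : bw⁻¹ * xp 1 * bw = xp w := by rw [← hkw]; group
    have e2 : h * xp w * h⁻¹ = y := by rw [← hw]; group
    have e4 : bv * xp v * bv⁻¹ = xp 1 := hkv
    have hfix : k * xp 1 * k⁻¹ = xp 1 := by
      calc k * xp 1 * k⁻¹
          = bv * (g⁻¹ * (h * (bw⁻¹ * xp 1 * bw) * h⁻¹) * g) * bv⁻¹ := by rw [hk]; group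
        _ = bv * (g⁻¹ * (h * xp w * h⁻¹) * g) * bv⁻¹ := by rw [e1]
        _ = bv * (g⁻¹ * y * g) * bv⁻¹ := by rw [e2]
        _ = bv * xp v * bv⁻¹ := by rw [hv]
        _ = xp 1 := e4
    have hcom : k * xp 1 = xp 1 * k := by
      calc k * xp 1 = (k * xp 1 * k⁻¹) * k := by group
        _ = xp 1 * k := by rw [hfix]
    have hN := starStar k hcom hsk
    obtain ⟨a1, ha1⟩ := npowE kw u
    obtain ⟨a2, ha2⟩ := hN a1
    obtain ⟨a3, ha3⟩ := npowEinv kv a2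
    refine ⟨a3, ?_⟩
    calc g⁻¹ * z * g
        = bv⁻¹ * (k * (bw * (h⁻¹ * z * h) * bw⁻¹) * k⁻¹) * bv := by rw [hk]; group
      _ = bv⁻¹ * (k * (bw * xp u * bw⁻¹) * k⁻¹) * bv := by rw [hu]
      _ = bv⁻¹ * (k * xp a1 * k⁻¹) * bv := by rw [ha1]
      _ = bv⁻¹ * xp a2 * bv := by rw [ha2]
      _ = xp a3 := ha3
  · -- invariance
    rintro g hg x _ y _ ⟨g₀, hs₀, ⟨v, hv⟩, w, hw⟩
    refine ⟨g * g₀, ?_, ⟨v, ?_⟩, ⟨w, ?_⟩⟩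
    · rw [map_mul, Equiv.Perm.mem_alternatingGroup.mp hg, hs₀, one_mul]
    · calc (g * g₀)⁻¹ * (g * x * g⁻¹) * (g * g₀) = g₀⁻¹ * x * g₀ := by group
        _ = xp v := hv
    · calc (g * g₀)⁻¹ * (g * y * g⁻¹) * (g * g₀) = g₀⁻¹ * y * g₀ := by group
        _ = xp w := hw
  · -- not equality
    intro hcon
    have hx := hmem 1 (by decide)
    have hy := hmem 2 (by decide)
    have h12 := (hcon (xp 1) hx (xp 2) hy).mp
      ⟨1, map_one _, ⟨1, by group⟩, ⟨2, by group⟩⟩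
    exact absurd h12 (by decide)
  · -- not full
    intro hcon
    have hx := hmem 1 (by decide)
    have hyy : (Equiv.swap (0:Fin 8) 1 * Equiv.swap 2 3 * Equiv.swap 4 6 * Equiv.swap 5 7) ∈ C := by
      refine ⟨by decide, by decide, by decide⟩
    set yy : Equiv.Perm (Fin 8) :=
      Equiv.swap (0:Fin 8) 1 * Equiv.swap 2 3 * Equiv.swap 4 6 * Equiv.swap 5 7 with hyydef
    obtain ⟨g, _, ⟨v, hv⟩, w, hw⟩ := hcon (xp 1) hx yy hyy
    have hvw : v ≠ w := by
      rintro rfl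
      have h1 : g⁻¹ * xp 1 * g = g⁻¹ * yy * g := hv.trans hw.symm
      have h2 : xp 1 = yy := by
        have := mul_left_cancel ((mul_right_cancel h1))
        exact this
      exact absurd h2 (by decide)
    have hprod : g⁻¹ * (xp 1 * yy) * g = xp v * xp w := by
      calc g⁻¹ * (xp 1 * yy) * g = (g⁻¹ * xp 1 * g) * (g⁻¹ * yy * g) := by group
        _ = xp v * xp w := by rw [hv, hw]
    rw [xpmul v w] at hprod
    have hne : (⟨v.val ^^^ w.val, xf_lt v w⟩ : Fin 8) ≠ 0 := by
      intro h0
      apply hvw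
      have hval : v.val ^^^ w.val = 0 := congrArg Fin.val h0
      exact (by decide : ∀ a b : Fin 8, a.val ^^^ b.val = 0 → a = b) v w hval
    have hfpf := (hmem _ hne).2.2
    have hform : xp 1 * yy = g * xp ⟨v.val ^^^ w.val, xf_lt v w⟩ * g⁻¹ := by
      calc xp 1 * yy = g * (g⁻¹ * (xp 1 * yy) * g) * g⁻¹ := by group
        _ = g * xp ⟨v.val ^^^ w.val, xf_lt v w⟩ * g⁻¹ := by rw [hprod]
    have h0 : (xp 1 * yy) 0 = 0 := by rw [hyydef]; decide
    rw [hform] at h0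
    simp only [Equiv.Perm.mul_apply] at h0
    have h0' : g (xp ⟨v.val ^^^ w.val, xf_lt v w⟩ (g⁻¹ 0)) = g (g⁻¹ 0) := by
      rw [h0]
      exact (Equiv.apply_symm_apply g 0).symm
    exact hfpf _ (g.injective h0')
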